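/- Let α > 0, γ > 0, let β : [0,∞) → [0,∞) be locally integrable, let ρ : [0,∞) → [0,∞) be continuous, and let w : [0,∞) → [0,∞) be locally integrable with w(ξ) ≥ γ (ρ(ξ) − 1) for almost every ξ ≥ 0. Assume that for all 0 ≤ s ≤ t: ρ(t) − ρ(s) + 2α ∫_s^t w(ξ) dξ ≤ 2 ∫_s^t β(ξ) dξ. Then for all 0 ≤ s ≤ t: ρ(t) ≤ ρ(s) e^{−2αγ(t−s)} + 2 ∫_s^t ( β(ξ) + αγ ) e^{−2αγ(t−ξ)} dξ. -/

import Mathlib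

open MeasureTheory
open Set

lemma exp_ftc (c a b : ℝ) :
    ∫ u in a..b, c * Real.exp (c * u) = Real.exp (c * b) - Real.exp (c * a) := by
  have h : ∀ u : ℝ, HasDerivAt (fun x => Real.exp (c * x)) (c * Real.exp (c * u)) u := by
    intro u
    have h1 : HasDerivAt (fun x : ℝ => c * x) c u := by
      simpa using (hasDerivAt_id u).const_mul c
    exact ((Real.hasDerivAt_exp (c * u)).comp u h1).congr_deriv (mul_comm _ _)
  exact intervalIntegral.integral_eq_sub_of_hasDerivAt (fun u _ => h u)
    ((continuous_const.mul ((Real.continuous_exp).comp (continuous_const.mul continuous_id))).intervalIntegrable _ _)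

lemma swap_key (f : ℝ → ℝ) (c s t : ℝ) (hst : s ≤ t)
    (hf : IntegrableOn f (Ioc s t)) :
    (∫ u in s..t, (c * Real.exp (c * u)) * ∫ ξ in u..t, f ξ) =
      ∫ ξ in s..t, (Real.exp (c * ξ) - Real.exp (c * s)) * f ξ := by
  set μ := volume.restrict (Ioc s t) with hμ
  set F : ℝ → ℝ → ℝ := fun u ξ => Set.indicator (Set.Ioi u) (fun ξ => (c * Real.exp (c * u)) * f ξ) ξ with hF
  have hS : MeasurableSet {p : ℝ × ℝ | p.1 < p.2} := measurableSet_lt measurable_fst measurable_snd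
  have hint : Integrable (Function.uncurry F) (μ.prod μ) := by
    have h1 : Integrable (fun u => c * Real.exp (c * u)) μ :=
      ((continuous_const.mul ((Real.continuous_exp).comp (continuous_const.mul continuous_id))).integrableOn_Ioc)
    have h2 : Integrable f μ := hf
    have h3 : Integrable (fun p : ℝ × ℝ => (c * Real.exp (c * p.1)) * f p.2) (μ.prod μ) :=
      h1.mul_prod h2
    have : Function.uncurry F =
        {p : ℝ × ℝ | p.1 < p.2}.indicator (fun p => (c * Real.exp (c * p.1)) * f p.2) := by
      ext p
      simp [Function.uncurry, hF, Set.indicator_apply, Set.mem_Ioi, Set.mem_setOf_eq]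
    rw [this]
    exact h3.indicator hS
  have lhs_eq : (∫ u in s..t, (c * Real.exp (c * u)) * ∫ ξ in u..t, f ξ) =
      ∫ u, (∫ ξ, F u ξ ∂μ) ∂μ := by
    rw [intervalIntegral.integral_of_le hst]
    refine setIntegral_congr_fun measurableSet_Ioc (fun u hu => ?_)
    have hut : u ≤ t := hu.2
    have hsu : s ≤ u := le_of_lt hu.1
    rw [intervalIntegral.integral_of_le hut]
    rw [hμ]
    rw [integral_indicator measurableSet_Ioi, Measure.restrict_restrict measurableSet_Ioi]
    rw [show Set.Ioi u ∩ Set.Ioc s t = Set.Ioc u t by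
      rw [Set.inter_comm, Set.Ioc_inter_Ioi, sup_eq_right.mpr hsu]]
    exact (integral_const_mul _ _).symm
  have rhs_eq : (∫ ξ, (∫ u, F u ξ ∂μ) ∂μ) =
      ∫ ξ in s..t, (Real.exp (c * ξ) - Real.exp (c * s)) * f ξ := by
    rw [intervalIntegral.integral_of_le hst]
    refine (setIntegral_congr_fun measurableSet_Ioc (fun ξ hξ => ?_))
    have hsξ : s < ξ := hξ.1
    have hξt : ξ ≤ t := hξ.2
    have hFξ : ∀ u, F u ξ = Set.indicator (Set.Iio ξ) (fun u => (c * Real.exp (c * u)) * f ξ) u := by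
      intro u
      simp only [hF, Set.indicator_apply, Set.mem_Ioi, Set.mem_Iio]
    simp_rw [hFξ]
    rw [hμ, integral_indicator measurableSet_Iio, Measure.restrict_restrict measurableSet_Iio]
    rw [show Set.Iio ξ ∩ Set.Ioc s t = Set.Ioo s ξ by
      ext u; simp only [Set.mem_inter_iff, Set.mem_Iio, Set.mem_Ioc, Set.mem_Ioo]
      constructor
      · rintro ⟨h1, h2, h3⟩; exact ⟨h2, h1⟩
      · rintro ⟨h1, h2⟩; exact ⟨h2, h1, le_trans (le_of_lt h2) hξt⟩]
    rw [integral_mul_const, ← integral_Ioc_eq_integral_Ioo,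
      ← intervalIntegral.integral_of_le (le_of_lt hsξ), exp_ftc]
  rw [lhs_eq, integral_integral_swap hint, rhs_eq]

/-- A priori estimate (eq. (4.7) of the paper): from the cumulative energy inequality
`ρ(t) − ρ(s) + 2α ∫_s^t w ≤ 2 ∫_s^t β` and the pointwise bound `w ≥ γ(ρ − 1)` one deduces
`ρ(t) ≤ ρ(s) e^{−2αγ(t−s)} + 2 ∫_s^t (β(ξ) + αγ) e^{−2αγ(t−ξ)} dξ`. -/
theorem apriori_estimate_evolution_inclusion
    (α γ : ℝ) (hα : 0 < α) (hγ : 0 < γ)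
    (β : ℝ → ℝ) (hβloc : ∀ T > (0 : ℝ), IntervalIntegrable β volume 0 T)
    (hβnn : ∀ t : ℝ, 0 ≤ t → 0 ≤ β t)
    (ρ : ℝ → ℝ) (hρCont : Continuous ρ) (hρnn : ∀ t : ℝ, 0 ≤ t → 0 ≤ ρ t)
    (w : ℝ → ℝ) (hwloc : ∀ T > (0 : ℝ), IntervalIntegrable w volume 0 T)
    (hwnn : ∀ t : ℝ, 0 ≤ t → 0 ≤ w t)
    (hwρ : ∀ᵐ ξ : ℝ, 0 ≤ ξ → γ * (ρ ξ - 1) ≤ w ξ)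
    (hineq : ∀ s t : ℝ, 0 ≤ s → s ≤ t →
      ρ t - ρ s + 2 * α * ∫ ξ in s..t, w ξ ≤ 2 * ∫ ξ in s..t, β ξ) :
    ∀ s t : ℝ, 0 ≤ s → s ≤ t →
      ρ t ≤ ρ s * Real.exp (-2 * α * γ * (t - s)) +
        2 * ∫ ξ in s..t, (β ξ + α * γ) * Real.exp (-2 * α * γ * (t - ξ)) := by
  intro s t hs hst
  rcases eq_or_lt_of_le hst with rfl | hlt
  · simp
  have ht0 : 0 < t := lt_of_le_of_lt hs hlt
  set c : ℝ := 2 * α * γ with hc_def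
  have hc : 0 < c := by positivity
  set g : ℝ → ℝ := fun ξ => 2 * β ξ + c with hg_def
  -- integrability of β, w, g on subintervals of [s,t]
  have hsub : ∀ u ∈ Icc s t, uIcc u t ⊆ uIcc 0 t := by
    intro u hu
    apply uIcc_subset_uIcc
    · exact mem_uIcc.mpr (Or.inl ⟨hs.trans hu.1, hu.2⟩)
    · exact mem_uIcc.mpr (Or.inl ⟨ht0.le, le_rfl⟩)
  have hβu : ∀ u ∈ Icc s t, IntervalIntegrable β volume u t :=
    fun u hu => (hβloc t ht0).mono_set (hsub u hu)
  have hwu : ∀ u ∈ Icc s t, IntervalIntegrable w volume u t :=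
    fun u hu => (hwloc t ht0).mono_set (hsub u hu)
  have hgu : ∀ u ∈ Icc s t, IntervalIntegrable g volume u t := by
    intro u hu
    exact ((hβu u hu).const_mul 2).add (intervalIntegrable_const)
  have hρu : ∀ u t' : ℝ, IntervalIntegrable ρ volume u t' :=
    fun u t' => hρCont.intervalIntegrable _ _
  -- Step 1: the differential-form inequality in integral form
  have step1 : ∀ u ∈ Icc s t,
      ρ t - ρ u + c * ∫ ξ in u..t, ρ ξ ≤ ∫ ξ in u..t, g ξ := by
    intro u hu
    have h0u : 0 ≤ u := hs.trans hu.1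
    have hut : u ≤ t := hu.2
    have hγρint : IntervalIntegrable (fun ξ => γ * (ρ ξ - 1)) volume u t :=
      (continuous_const.mul (hρCont.sub continuous_const)).intervalIntegrable _ _
    have hcmp : (∫ ξ in u..t, γ * (ρ ξ - 1)) ≤ ∫ ξ in u..t, w ξ := by
      refine intervalIntegral.integral_mono_ae_restrict hut hγρint (hwu u hu) ?_
      have h1 := ae_restrict_of_ae (s := Icc u t) hwρ
      have h2 := ae_restrict_mem (μ := volume) (measurableSet_Icc (a := u) (b := t))
      filter_upwards [h1, h2] with ξ hξ1 hξ2
      exact hξ1 (h0u.trans hξ2.1)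
    have hγeq : (∫ ξ in u..t, γ * (ρ ξ - 1)) = γ * ((∫ ξ in u..t, ρ ξ) - (t - u)) := by
      rw [intervalIntegral.integral_const_mul]
      congr 1
      rw [intervalIntegral.integral_sub (hρu u t) intervalIntegrable_const,
        intervalIntegral.integral_const]
      simp
    have hgeq : (∫ ξ in u..t, g ξ) = 2 * (∫ ξ in u..t, β ξ) + c * (t - u) := by
      rw [hg_def]
      rw [intervalIntegral.integral_add ((hβu u hu).const_mul 2) intervalIntegrable_const,
        intervalIntegral.integral_const_mul, intervalIntegral.integral_const]
      simp [mul_comm]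
    have hbase := hineq u t h0u hut
    have hkey : c * ((∫ ξ in u..t, ρ ξ) - (t - u)) ≤ 2 * α * ∫ ξ in u..t, w ξ := by
      rw [hc_def]
      have : γ * ((∫ ξ in u..t, ρ ξ) - (t - u)) ≤ ∫ ξ in u..t, w ξ := by
        rw [← hγeq]; exact hcmp
      calc 2 * α * γ * ((∫ ξ in u..t, ρ ξ) - (t - u))
          = 2 * α * (γ * ((∫ ξ in u..t, ρ ξ) - (t - u))) := by ring
        _ ≤ 2 * α * ∫ ξ in u..t, w ξ := by
            apply mul_le_mul_of_nonneg_left this (by positivity)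
    rw [hgeq]
    nlinarith [hbase, hkey]
  -- abbreviations
  set A : ℝ := ∫ ξ in s..t, ρ ξ with hA
  set Aexp : ℝ := ∫ ξ in s..t, Real.exp (c * ξ) * ρ ξ with hAexp
  set B : ℝ := ∫ ξ in s..t, g ξ with hB
  set Bexp : ℝ := ∫ ξ in s..t, Real.exp (c * ξ) * g ξ with hBexp
  have hsIcc : s ∈ Icc s t := ⟨le_rfl, hst⟩
  have hg_st : IntervalIntegrable g volume s t := hgu s hsIcc
  have hexp_cont : Continuous (fun ξ : ℝ => Real.exp (c * ξ)) :=
    (Real.continuous_exp).comp (continuous_const.mul continuous_id)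
  have hexpg_int : IntervalIntegrable (fun ξ => Real.exp (c * ξ) * g ξ) volume s t :=
    hg_st.continuousOn_mul hexp_cont.continuousOn
  -- continuity of primitives
  have hg_on : IntegrableOn g (uIcc s t) volume := by
    rw [uIcc_of_le hst, integrableOn_Icc_iff_integrableOn_Ioc]
    exact hg_st.1
  have hGcont : ContinuousOn (fun u => ∫ ξ in u..t, g ξ) (uIcc s t) :=
    intervalIntegral.continuousOn_primitive_interval_left hg_on
  have hρ_on : IntegrableOn ρ (uIcc s t) volume :=
    (hρCont.integrableOn_Icc).mono_set (by rw [uIcc_of_le hst])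
  have hRcont : ContinuousOn (fun u => ∫ ξ in u..t, ρ ξ) (uIcc s t) :=
    intervalIntegral.continuousOn_primitive_interval_left hρ_on
  have hcE_cont : Continuous (fun u : ℝ => c * Real.exp (c * u)) := continuous_const.mul hexp_cont
  -- nonnegativity of the big integral
  have hnn : 0 ≤ ∫ u in s..t, (c * Real.exp (c * u)) *
      ((∫ ξ in u..t, g ξ) - (ρ t - ρ u + c * ∫ ξ in u..t, ρ ξ)) := by
    apply intervalIntegral.integral_nonneg hst
    intro u hu
    exact mul_nonneg (by positivity) (sub_nonneg.mpr (step1 u hu))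
  -- compute the big integral
  have i1 : IntervalIntegrable (fun u => (c * Real.exp (c * u)) * ∫ ξ in u..t, g ξ) volume s t :=
    (hcE_cont.continuousOn.mul hGcont).intervalIntegrable
  have i2 : IntervalIntegrable (fun u => (c * Real.exp (c * u)) * ρ t) volume s t :=
    ((hcE_cont.mul continuous_const).intervalIntegrable _ _)
  have i3 : IntervalIntegrable (fun u => (c * Real.exp (c * u)) * ρ u) volume s t :=
    ((hcE_cont.mul hρCont).intervalIntegrable _ _)
  have i4 : IntervalIntegrable (fun u => c * ((c * Real.exp (c * u)) * ∫ ξ in u..t, ρ ξ)) volume s t :=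
    ((hcE_cont.continuousOn.mul hRcont).intervalIntegrable).const_mul c
  have hbig : (∫ u in s..t, (c * Real.exp (c * u)) *
      ((∫ ξ in u..t, g ξ) - (ρ t - ρ u + c * ∫ ξ in u..t, ρ ξ))) =
      (Bexp - Real.exp (c * s) * B) - (Real.exp (c * t) - Real.exp (c * s)) * ρ t
        + c * Aexp - c * (Aexp - Real.exp (c * s) * A) := by
    have hsplit : (fun u => (c * Real.exp (c * u)) *
        ((∫ ξ in u..t, g ξ) - (ρ t - ρ u + c * ∫ ξ in u..t, ρ ξ))) =
        fun u => (((c * Real.exp (c * u)) * ∫ ξ in u..t, g ξ)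
          - ((c * Real.exp (c * u)) * ρ t)
          + ((c * Real.exp (c * u)) * ρ u))
          - (c * ((c * Real.exp (c * u)) * ∫ ξ in u..t, ρ ξ)) := by
      funext u; ring
    rw [hsplit]
    rw [intervalIntegral.integral_sub (((i1.sub i2)).add i3) i4,
      intervalIntegral.integral_add (i1.sub i2) i3,
      intervalIntegral.integral_sub i1 i2]
    have e1 : (∫ u in s..t, (c * Real.exp (c * u)) * ∫ ξ in u..t, g ξ) =
        Bexp - Real.exp (c * s) * B := by
      rw [swap_key g c s t hst (hg_on.mono_set (by rw [uIcc_of_le hst]; exact Ioc_subset_Icc_self))]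
      have : ∀ ξ, (Real.exp (c * ξ) - Real.exp (c * s)) * g ξ =
          Real.exp (c * ξ) * g ξ - Real.exp (c * s) * g ξ := fun ξ => by ring
      simp_rw [this]
      rw [intervalIntegral.integral_sub hexpg_int (hg_st.const_mul _),
        intervalIntegral.integral_const_mul]
    have e2 : (∫ u in s..t, (c * Real.exp (c * u)) * ρ t) =
        (Real.exp (c * t) - Real.exp (c * s)) * ρ t := by
      rw [intervalIntegral.integral_mul_const, exp_ftc]
    have e3 : (∫ u in s..t, (c * Real.exp (c * u)) * ρ u) = c * Aexp := by
      simp_rw [mul_assoc]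
      rw [intervalIntegral.integral_const_mul]
    have e4 : (∫ u in s..t, c * ((c * Real.exp (c * u)) * ∫ ξ in u..t, ρ ξ)) =
        c * (Aexp - Real.exp (c * s) * A) := by
      rw [intervalIntegral.integral_const_mul,
        swap_key ρ c s t hst (hρ_on.mono_set (by rw [uIcc_of_le hst]; exact Ioc_subset_Icc_self))]
      congr 1
      have : ∀ ξ, (Real.exp (c * ξ) - Real.exp (c * s)) * ρ ξ =
          Real.exp (c * ξ) * ρ ξ - Real.exp (c * s) * ρ ξ := fun ξ => by ring
      simp_rw [this]
      rw [intervalIntegral.integral_sub ((hρu s t).continuousOn_mul hexp_cont.continuousOn)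
        ((hρCont.intervalIntegrable _ _).const_mul _),
        intervalIntegral.integral_const_mul]
    rw [e1, e2, e3, e4]
  rw [hbig] at hnn
  -- base inequality at u = s
  have hbase := step1 s hsIcc
  have hbase' : Real.exp (c * s) * (ρ t - ρ s + c * A) ≤ Real.exp (c * s) * B :=
    mul_le_mul_of_nonneg_left hbase (Real.exp_pos _).le
  have hfinal : ρ t * Real.exp (c * t) ≤ ρ s * Real.exp (c * s) + Bexp := by
    nlinarith [hnn, hbase']
  -- convert to the stated form
  have hE : Real.exp (-(c * t)) * Real.exp (c * t) = 1 := by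
    rw [← Real.exp_add]; simp
  have hR2 : (2 : ℝ) * (∫ ξ in s..t, (β ξ + α * γ) * Real.exp (-2 * α * γ * (t - ξ))) =
      Real.exp (-(c * t)) * Bexp := by
    have hptw : ∀ ξ, (β ξ + α * γ) * Real.exp (-2 * α * γ * (t - ξ)) =
        (Real.exp (-(c * t)) / 2) * (Real.exp (c * ξ) * g ξ) := by
      intro ξ
      rw [hg_def, hc_def]
      rw [show -2 * α * γ * (t - ξ) = -(2 * α * γ * t) + 2 * α * γ * ξ by ring, Real.exp_add]
      ring
    simp_rw [hptw]
    rw [intervalIntegral.integral_const_mul, hBexp]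
    ring
  have hρs : ρ s * Real.exp (-2 * α * γ * (t - s)) =
      Real.exp (-(c * t)) * (ρ s * Real.exp (c * s)) := by
    rw [hc_def, show -2 * α * γ * (t - s) = -(2 * α * γ * t) + 2 * α * γ * s by ring,
      Real.exp_add]
    ring
  calc ρ t = (Real.exp (-(c * t)) * Real.exp (c * t)) * ρ t := by rw [hE]; ring
    _ = Real.exp (-(c * t)) * (ρ t * Real.exp (c * t)) := by ring
    _ ≤ Real.exp (-(c * t)) * (ρ s * Real.exp (c * s) + Bexp) :=
        mul_le_mul_of_nonneg_left hfinal (Real.exp_pos _).le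
    _ = ρ s * Real.exp (-2 * α * γ * (t - s)) +
        2 * ∫ ξ in s..t, (β ξ + α * γ) * Real.exp (-2 * α * γ * (t - ξ)) := by
        rw [hR2, hρs]; ring
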